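/- Let (G,w) be a weighted graph and φ: [0,∞) → [0,∞) a homeomorphism fixing 0. The weight w extends to a Φ-pseudosemimetric on V(G) with Φ(x,y) = φ⁻¹(φ(x) + φ(y)) if and only if for every cycle C ⊆ G and every edge e ∈ E(C), w(e) ≤ φ⁻¹(∑_{ẽ ∈ E(C), ẽ ≠ e} φ(w(ẽ))). -/

import Mathlib

open scoped NNReal ENNReal Classical
open SimpleGraph

namespace Stmt12Aux

variable {V : Type*} (G : SimpleGraph V)

noncomputable def cost (f : Sym2 V → ℝ≥0) {x y : V} (p : G.Walk x y) : ℝ≥0∞ :=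
  (((p.edges.map f).sum : ℝ≥0) : ℝ≥0∞)

lemma cost_ne_top (f : Sym2 V → ℝ≥0) {x y : V} (p : G.Walk x y) : cost G f p ≠ ⊤ :=
  ENNReal.coe_ne_top

lemma cost_nil (f : Sym2 V → ℝ≥0) {x : V} : cost G f (Walk.nil : G.Walk x x) = 0 := by
  simp [cost]

lemma cost_reverse (f : Sym2 V → ℝ≥0) {x y : V} (p : G.Walk x y) :
    cost G f p.reverse = cost G f p := by
  simp [cost, Walk.edges_reverse, List.map_reverse, List.sum_reverse]

lemma cost_append (f : Sym2 V → ℝ≥0) {x y z : V} (p : G.Walk x y) (q : G.Walk y z) :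
    cost G f (p.append q) = cost G f p + cost G f q := by
  simp [cost, Walk.edges_append]

noncomputable def sd (f : Sym2 V → ℝ≥0) (x y : V) : ℝ≥0∞ :=
  ⨅ p : G.Walk x y, cost G f p

lemma sd_self (f : Sym2 V → ℝ≥0) (x : V) : sd G f x x = 0 := by
  refine le_antisymm ?_ bot_le
  exact le_trans (iInf_le _ Walk.nil) (by simp [cost_nil])

lemma sd_symm (f : Sym2 V → ℝ≥0) (x y : V) : sd G f x y = sd G f y x := by
  have h : ∀ a b : V, sd G f a b ≤ sd G f b a := by
    intro a b
    refine le_iInf fun p => ?_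
    exact le_trans (iInf_le _ p.reverse) (le_of_eq (cost_reverse G f p))
  exact le_antisymm (h x y) (h y x)

lemma sd_triangle (f : Sym2 V → ℝ≥0) (x y z : V) :
    sd G f x y ≤ sd G f x z + sd G f z y := by
  have h : ∀ (p : G.Walk x z) (q : G.Walk z y), sd G f x y ≤ cost G f p + cost G f q := by
    intro p q
    exact le_trans (iInf_le _ (p.append q)) (le_of_eq (cost_append G f p q))
  calc sd G f x y ≤ ⨅ p : G.Walk x z, ⨅ q : G.Walk z y, (cost G f p + cost G f q) :=
        le_iInf fun p => le_iInf fun q => h p q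
    _ = sd G f x z + sd G f z y := by
        rw [sd, sd, ENNReal.iInf_add]
        exact iInf_congr fun p => (ENNReal.add_iInf).symm

lemma sd_ne_top (f : Sym2 V → ℝ≥0) {x y : V} (h : G.Reachable x y) :
    sd G f x y ≠ ⊤ := by
  obtain ⟨p⟩ := h
  exact ne_top_of_le_ne_top (cost_ne_top G f p) (iInf_le _ p)

lemma sd_le_edge (f : Sym2 V → ℝ≥0) {u v : V} (h : G.Adj u v) :
    sd G f u v ≤ (f s(u, v) : ℝ≥0∞) := by
  refine le_trans (iInf_le _ (Walk.cons h Walk.nil)) ?_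
  simp [cost]

lemma edge_le_walk (f : Sym2 V → ℝ≥0)
    (hcyc : ∀ (a b : V) (h : G.Adj a b) (p : G.Walk b a),
      (Walk.cons h p).IsCycle → f s(a, b) ≤ (p.edges.map f).sum)
    {a b : V} (h : G.Adj a b) (p : G.Walk b a) :
    f s(a, b) ≤ (p.edges.map f).sum := by
  classical
  have hsub : (p.bypass.edges.map f).sum ≤ (p.edges.map f).sum := by
    have hnd : p.bypass.edges.Nodup := p.bypass_isPath.edges_nodup
    have hle : (↑(p.bypass.edges.map f) : Multiset ℝ≥0) ≤ ↑(p.edges.map f) := by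
      rw [← Multiset.map_coe, ← Multiset.map_coe]
      refine Multiset.map_le_map ?_
      rw [Multiset.le_iff_count]
      intro e
      by_cases he : e ∈ p.bypass.edges
      · have h1 : Multiset.count e (↑p.bypass.edges : Multiset (Sym2 V)) ≤ 1 :=
          Multiset.nodup_iff_count_le_one.mp (by exact hnd) e
        have h2 : 1 ≤ Multiset.count e (↑p.edges : Multiset (Sym2 V)) :=
          Multiset.one_le_count_iff_mem.mpr (by simpa using p.edges_bypass_subset he)
        omega
      · rw [Multiset.count_eq_zero_of_notMem (by simpa using he)]
        exact Nat.zero_le _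
    obtain ⟨u, hu⟩ := Multiset.le_iff_exists_add.mp hle
    calc (p.bypass.edges.map f).sum
        = (↑(p.bypass.edges.map f) : Multiset ℝ≥0).sum := rfl
      _ ≤ (↑(p.bypass.edges.map f) : Multiset ℝ≥0).sum + u.sum := self_le_add_right _ _
      _ = (↑(p.edges.map f) : Multiset ℝ≥0).sum := by rw [hu, Multiset.sum_add]
      _ = (p.edges.map f).sum := rfl
  refine le_trans ?_ hsub
  by_cases he : s(a, b) ∈ p.bypass.edges
  · exact List.le_sum_of_mem (List.mem_map_of_mem he)
  · exact hcyc a b h p.bypass ((Walk.cons_isCycle_iff _ _).mpr ⟨p.bypass_isPath, he⟩)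

lemma sd_edge (f : Sym2 V → ℝ≥0)
    (hcyc : ∀ (a b : V) (h : G.Adj a b) (p : G.Walk b a),
      (Walk.cons h p).IsCycle → f s(a, b) ≤ (p.edges.map f).sum)
    {u v : V} (h : G.Adj u v) :
    sd G f u v = (f s(u, v) : ℝ≥0∞) := by
  refine le_antisymm (sd_le_edge G f h) (le_iInf fun p => ?_)
  have := edge_le_walk G f hcyc h.symm p
  rw [Sym2.eq_swap] at this
  rw [cost]
  exact_mod_cast this

noncomputable def rt (x : V) : V := (G.connectedComponentMk x).out

lemma reachable_rt (x : V) : G.Reachable x (rt G x) := by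
  have : G.connectedComponentMk (rt G x) = G.connectedComponentMk x := Quot.out_eq _
  exact (ConnectedComponent.eq.mp this).symm

lemma rt_eq_of_reachable {x y : V} (h : G.Reachable x y) : rt G x = rt G y := by
  unfold rt
  rw [ConnectedComponent.eq.mpr h]

noncomputable def T (f : Sym2 V → ℝ≥0) (x y : V) : ℝ≥0∞ :=
  if G.Reachable x y then sd G f x y
  else (sd G f x (rt G x) + 1) + (sd G f y (rt G y) + 1)

lemma T_ne_top (f : Sym2 V → ℝ≥0) (x y : V) : T G f x y ≠ ⊤ := by
  unfold T
  split
  · exact sd_ne_top G f ‹_›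
  · have h1 := sd_ne_top G f (reachable_rt G x)
    have h2 := sd_ne_top G f (reachable_rt G y)
    simp [ENNReal.add_ne_top, h1, h2]

lemma T_self (f : Sym2 V → ℝ≥0) (x : V) : T G f x x = 0 := by
  simp [T, Reachable.refl, sd_self]

lemma T_symm (f : Sym2 V → ℝ≥0) (x y : V) : T G f x y = T G f y x := by
  unfold T
  by_cases h : G.Reachable x y
  · simp [h, h.symm, sd_symm]
  · have h' : ¬ G.Reachable y x := fun hh => h hh.symm
    simp only [if_neg h, if_neg h']
    exact add_comm _ _

lemma T_triangle (f : Sym2 V → ℝ≥0) (x y z : V) :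
    T G f x y ≤ T G f x z + T G f y z := by
  by_cases hxz : G.Reachable x z <;> by_cases hyz : G.Reachable y z
  · have hxy : G.Reachable x y := hxz.trans hyz.symm
    rw [T, T, T, if_pos hxy, if_pos hxz, if_pos hyz]
    calc sd G f x y ≤ sd G f x z + sd G f z y := sd_triangle G f x y z
      _ = sd G f x z + sd G f y z := by rw [sd_symm G f z y]
  · have hxy : ¬ G.Reachable x y := fun hh => hyz (hh.symm.trans hxz)
    rw [T, T, T, if_neg hxy, if_pos hxz, if_neg hyz]
    have hrz : rt G z = rt G x := (rt_eq_of_reachable G hxz).symm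
    rw [hrz]
    have ht : sd G f x (rt G x) ≤ sd G f x z + sd G f z (rt G x) :=
      sd_triangle G f x (rt G x) z
    calc (sd G f x (rt G x) + 1) + (sd G f y (rt G y) + 1)
        ≤ (sd G f x z + sd G f z (rt G x) + 1) + (sd G f y (rt G y) + 1) := by
          gcongr
      _ = sd G f x z + ((sd G f y (rt G y) + 1) + (sd G f z (rt G x) + 1)) := by ring
  · have hxy : ¬ G.Reachable x y := fun hh => hxz (hh.trans hyz)
    rw [T, T, T, if_neg hxy, if_neg hxz, if_pos hyz]
    have hrz : rt G z = rt G y := (rt_eq_of_reachable G hyz).symm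
    rw [hrz]
    have ht : sd G f y (rt G y) ≤ sd G f y z + sd G f z (rt G y) :=
      sd_triangle G f y (rt G y) z
    calc (sd G f x (rt G x) + 1) + (sd G f y (rt G y) + 1)
        ≤ (sd G f x (rt G x) + 1) + (sd G f y z + sd G f z (rt G y) + 1) := by gcongr
      _ = ((sd G f x (rt G x) + 1) + (sd G f z (rt G y) + 1)) + sd G f y z := by ring
  · rw [T, T, T, if_neg hxz, if_neg hyz]
    by_cases hxy : G.Reachable x y
    · rw [if_pos hxy]
      have hr : rt G y = rt G x := (rt_eq_of_reachable G hxy).symm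
      have ht : sd G f x y ≤ sd G f x (rt G x) + sd G f y (rt G y) := by
        rw [hr, ← sd_symm G f (rt G x) y]
        exact sd_triangle G f x y (rt G x)
      refine le_trans ht (add_le_add ?_ ?_) <;>
        exact le_trans (self_le_add_right _ _) (self_le_add_right _ _)
    · rw [if_neg hxy]
      exact add_le_add (self_le_add_right _ _) (self_le_add_right _ _)

lemma T_edge (f : Sym2 V → ℝ≥0)
    (hcyc : ∀ (a b : V) (h : G.Adj a b) (p : G.Walk b a),
      (Walk.cons h p).IsCycle → f s(a, b) ≤ (p.edges.map f).sum)
    {u v : V} (h : G.Adj u v) :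
    T G f u v = (f s(u, v) : ℝ≥0∞) := by
  rw [T, if_pos h.reachable]
  exact sd_edge G f hcyc h

end Stmt12Aux


open scoped NNReal
open SimpleGraph

/-- for a homeomorphism `φ` of `[0,∞)` fixing `0` (with inverse `ψ`) and
`Φ(x,y) = ψ(φ x + φ y)`, the weight `w` extends to a `Φ`-pseudosemimetric on `V(G)` iff
for every cycle `C` (an edge `{a,b}` plus a walk `p : b → a` with `Walk.cons h p` a cycle)
we have `w({a,b}) ≤ ψ(∑_{ẽ ∈ C∖{a,b}} φ(w(ẽ)))`. -/
theorem stmt_12 {V : Type*} (G : SimpleGraph V) (w : Sym2 V → ℝ≥0)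
    (φ ψ : ℝ≥0 → ℝ≥0) (hc : Continuous φ) (hm : StrictMono φ)
    (h0 : φ 0 = 0) (hinv1 : ∀ y, φ (ψ y) = y) (hinv2 : ∀ x, ψ (φ x) = x) :
    (∃ d : V → V → ℝ≥0,
        (∀ x y, d x y = d y x) ∧ (∀ x, d x x = 0) ∧
        (∀ x y z, d x y ≤ ψ (φ (d x z) + φ (d y z))) ∧
        ∀ u v, G.Adj u v → d u v = w s(u, v)) ↔
    (∀ (a b : V) (h : G.Adj a b) (p : G.Walk b a),
        (SimpleGraph.Walk.cons h p).IsCycle →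
        w s(a, b) ≤ ψ ((p.edges.map fun e => φ (w e)).sum)) := by
  have hψ : Monotone ψ := fun a b hab => hm.le_iff_le.mp (by rw [hinv1, hinv1]; exact hab)
  have hψ0 : ψ 0 = 0 := by simpa [h0] using hinv2 0
  constructor
  · rintro ⟨d, hsymm, hself, htri, hext⟩ a b h p _
    have key : ∀ {x y : V} (q : G.Walk x y),
        φ (d x y) ≤ (q.edges.map fun e => φ (w e)).sum := by
      intro x y q
      induction q with
      | nil => simp [hself, h0]
      | @cons u m y' h' q' ih =>
        have h1 : d u y' ≤ ψ (φ (d u m) + φ (d y' m)) := htri u y' m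
        have h2 : φ (d u y') ≤ φ (d u m) + φ (d y' m) := by
          have := hm.monotone h1
          rwa [hinv1] at this
        have h3 : φ (d u m) = φ (w s(u, m)) := by rw [hext u m h']
        have h4 : φ (d y' m) = φ (d m y') := by rw [hsymm]
        calc φ (d u y') ≤ φ (d u m) + φ (d y' m) := h2
          _ = φ (w s(u, m)) + φ (d m y') := by rw [h3, h4]
          _ ≤ φ (w s(u, m)) + ((q'.edges.map fun e => φ (w e)).sum) := by
              exact add_le_add (le_refl _) ih
          _ = (((Walk.cons h' q').edges.map fun e => φ (w e)).sum) := by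
              rw [Walk.edges_cons, List.map_cons, List.sum_cons]
    have hkey := key p
    have hd : d b a = w s(a, b) := by rw [hsymm, hext a b h]
    rw [hd] at hkey
    calc w s(a, b) = ψ (φ (w s(a, b))) := (hinv2 _).symm
      _ ≤ ψ ((p.edges.map fun e => φ (w e)).sum) := hψ hkey
  · intro hcyc
    set f : Sym2 V → ℝ≥0 := fun e => φ (w e) with hf
    have hcyc' : ∀ (a b : V) (h : G.Adj a b) (p : G.Walk b a),
        (Walk.cons h p).IsCycle → f s(a, b) ≤ (p.edges.map f).sum := by
      intro a b h p hcy
      have h1 := hm.monotone (hcyc a b h p hcy)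
      rwa [hinv1] at h1
    refine ⟨fun x y => ψ ((Stmt12Aux.T G f x y).toNNReal), fun x y => ?_, fun x => ?_,
      fun x y z => ?_, fun u v h => ?_⟩
    · beta_reduce
      rw [Stmt12Aux.T_symm]
    · beta_reduce
      rw [Stmt12Aux.T_self, ENNReal.toNNReal_zero, hψ0]
    · beta_reduce
      rw [hinv1, hinv1]
      refine hψ ?_
      have ht := Stmt12Aux.T_triangle G f x y z
      have h1 := Stmt12Aux.T_ne_top G f x z
      have h2 := Stmt12Aux.T_ne_top G f y z
      have h3 : (Stmt12Aux.T G f x z + Stmt12Aux.T G f y z) ≠ ⊤ := by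
        simp [ENNReal.add_ne_top, h1, h2]
      calc (Stmt12Aux.T G f x y).toNNReal
          ≤ (Stmt12Aux.T G f x z + Stmt12Aux.T G f y z).toNNReal :=
            ENNReal.toNNReal_mono h3 ht
        _ = (Stmt12Aux.T G f x z).toNNReal + (Stmt12Aux.T G f y z).toNNReal :=
            ENNReal.toNNReal_add h1 h2
    · beta_reduce
      rw [Stmt12Aux.T_edge G f hcyc' h, ENNReal.toNNReal_coe]
      simp only [hf]
      exact hinv2 _
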